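/- The symplectic group acts transitively on centered elliptic geometric quantum states: if (ℓ, ℓ') and (ℓ'', ℓ''') are Lagrangian frames in (ℝ^{2n}, σ) and X_ℓ ⊆ ℓ, X_{ℓ''} ⊆ ℓ'' are centered ellipsoids carried by ℓ and ℓ'' respectively, then there exists a linear symplectic automorphism S of ℝ^{2n} such that S(X_ℓ + (X_ℓ)^ℏ_{ℓ'}) = X_{ℓ''} + (X_{ℓ''})^ℏ_{ℓ'''}, with S(ℓ) = ℓ'', S(ℓ') = ℓ''' and S(X_ℓ) = X_{ℓ''}. -/

import Mathlib

open MeasureTheory Real Metric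
open scoped RealInnerProductSpace Pointwise

noncomputable section

/-- `ℝⁿ` with its Euclidean structure. -/
abbrev En (n : ℕ) := EuclideanSpace ℝ (Fin n)

/-- The phase space `ℝ²ⁿ = ℝⁿ × ℝⁿ` with its Euclidean structure, the first block of
coordinates being the positions `x` and the second block the momenta `p`. -/
abbrev PS (n : ℕ) := EuclideanSpace ℝ (Fin n ⊕ Fin n)

/-- The standard symplectic matrix `J = [[0, I], [-I, 0]]`. -/
def Jmat (n : ℕ) : Matrix (Fin n ⊕ Fin n) (Fin n ⊕ Fin n) ℝ :=
  Matrix.fromBlocks 0 1 (-1) 0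

/-- The standard symplectic form `σ(z, z') = ⟨Jz, z'⟩`. -/
def symp (n : ℕ) (z z' : PS n) : ℝ := ⟪(Matrix.toEuclideanLin (Jmat n)) z, z'⟫

/-- The quadratic form `z ↦ ⟨Mz, z⟩`. -/
def qf {m : Type*} [Fintype m] [DecidableEq m] (M : Matrix m m ℝ)
    (z : EuclideanSpace ℝ m) : ℝ := ⟪(Matrix.toEuclideanLin M) z, z⟫

/-- The symplectic `ℏ`-polar dual `Ω^{ℏ,σ} = {z' : ∀ z ∈ Ω, σ(z, z') ≤ ℏ}`. -/
def sympDual (n : ℕ) (ℏ : ℝ) (Ω : Set (PS n)) : Set (PS n) :=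
  {z' | ∀ z ∈ Ω, symp n z z' ≤ ℏ}

/-- A linear automorphism of `ℝ²ⁿ` is symplectic if it preserves the symplectic form. -/
def IsSymplectic {n : ℕ} (S : PS n ≃ₗ[ℝ] PS n) : Prop :=
  ∀ z z', symp n (S z) (S z') = symp n z z'

/-- A Lagrangian plane: an `n`-dimensional subspace of `ℝ²ⁿ` on which `σ` vanishes
identically. -/
def IsLagrangian (n : ℕ) (ℓ : Submodule ℝ (PS n)) : Prop :=
  Module.finrank ℝ ℓ = n ∧ ∀ z ∈ ℓ, ∀ z' ∈ ℓ, symp n z z' = 0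

/-- A Lagrangian frame: a pair of transversal Lagrangian planes. -/
def IsLagrangianFrame (n : ℕ) (ℓ ℓ' : Submodule ℝ (PS n)) : Prop :=
  IsLagrangian n ℓ ∧ IsLagrangian n ℓ' ∧ ℓ ⊓ ℓ' = ⊥

/-- The Lagrangian polar dual of `X ⊆ ℓ` with respect to `ℓ'`:
`X^ℏ_{ℓ'} = {z' ∈ ℓ' : ∀ z ∈ X, σ(z, z') ≤ ℏ}`. -/
def lagDual (n : ℕ) (ℏ : ℝ) (ℓ' : Submodule ℝ (PS n)) (X : Set (PS n)) : Set (PS n) :=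
  {z' | z' ∈ ℓ' ∧ ∀ z ∈ X, symp n z z' ≤ ℏ}

/-- The position part of a phase-space point. -/
def xpart (n : ℕ) (z : PS n) : En n := WithLp.toLp 2 (fun i => z (Sum.inl i))

/-- The momentum part of a phase-space point. -/
def ppart (n : ℕ) (z : PS n) : En n := WithLp.toLp 2 (fun i => z (Sum.inr i))

/-- A centered ellipsoid carried by the subspace `ℓ`: the image of a Euclidean ball of
`ℝⁿ` under a linear isomorphism onto `ℓ`. -/
def IsCenteredEllipsoidOn (n : ℕ) (ℓ : Submodule ℝ (PS n)) (X : Set (PS n)) : Prop :=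
  ∃ L : En n →ₗ[ℝ] PS n, ∃ r : ℝ, 0 < r ∧ Function.Injective L ∧
    LinearMap.range L = ℓ ∧ X = ⇑L '' Metric.closedBall (0 : En n) r

-- basics
lemma Jmat_mul (n : ℕ) (z : PS n) (i : Fin n ⊕ Fin n) :
    (Matrix.toEuclideanLin (Jmat n)) z i =
      Sum.elim (fun j => z (Sum.inr j)) (fun j => -z (Sum.inl j)) i := by
  show ((Jmat n).mulVec (WithLp.equiv 2 _ z)) i = _
  cases i with
  | inl j => simp [Jmat, Matrix.mulVec, dotProduct, Matrix.fromBlocks,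
      Fintype.sum_sum_type, Matrix.one_apply, Finset.sum_ite_eq]
  | inr j => simp [Jmat, Matrix.mulVec, dotProduct, Matrix.fromBlocks,
      Fintype.sum_sum_type, Matrix.one_apply, Finset.sum_ite_eq]

lemma symp_eq (n : ℕ) (z z' : PS n) :
    symp n z z' = ⟪ppart n z, xpart n z'⟫ - ⟪xpart n z, ppart n z'⟫ := by
  simp only [symp, PiLp.inner_apply, RCLike.inner_apply, conj_trivial,
    Fintype.sum_sum_type, Jmat_mul]
  simp [xpart, ppart, Finset.sum_sub_distrib]
  ring

lemma symp_add_left (n : ℕ) (a b z' : PS n) :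
    symp n (a + b) z' = symp n a z' + symp n b z' := by
  simp [symp, map_add, inner_add_left]
lemma symp_add_right (n : ℕ) (z a b : PS n) :
    symp n z (a + b) = symp n z a + symp n z b := by
  simp [symp, inner_add_right]
lemma symp_smul_left (n : ℕ) (c : ℝ) (a z' : PS n) :
    symp n (c • a) z' = c * symp n a z' := by
  simp only [symp, LinearMap.map_smul]
  exact real_inner_smul_left _ _ _
lemma symp_smul_right (n : ℕ) (c : ℝ) (z a : PS n) :
    symp n z (c • a) = c * symp n z a := by
  exact real_inner_smul_right _ _ _
lemma symp_swap (n : ℕ) (z z' : PS n) : symp n z z' = - symp n z' z := by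
  simp only [symp_eq]
  rw [real_inner_comm (ppart n z), real_inner_comm (xpart n z)]
  ring

lemma part_ext (n : ℕ) (z : PS n) (hx : xpart n z = 0) (hp : ppart n z = 0) : z = 0 := by
  ext i
  cases i with
  | inl j => have := congrArg (· j) hx; simpa [xpart] using this
  | inr j => have := congrArg (· j) hp; simpa [ppart] using this

lemma symp_nondeg (n : ℕ) (z' : PS n) (h : ∀ z, symp n z z' = 0) : z' = 0 := by
  set z : PS n := WithLp.toLp 2 (fun i => Sum.elim (fun j => -z' (Sum.inr j)) (fun j => z' (Sum.inl j)) i) with hz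
  have hx : xpart n z = -ppart n z' := rfl
  have hp : ppart n z = xpart n z' := rfl
  have h0 := h z
  rw [symp_eq, hx, hp, inner_neg_left] at h0
  have h0' : ⟪xpart n z', xpart n z'⟫ + ⟪ppart n z', ppart n z'⟫ = 0 := by linarith
  have h1 : ⟪xpart n z', xpart n z'⟫ = 0 := by
    have := real_inner_self_nonneg (x := xpart n z')
    have := real_inner_self_nonneg (x := ppart n z')
    linarith
  have h2 : ⟪ppart n z', ppart n z'⟫ = 0 := by
    have := real_inner_self_nonneg (x := xpart n z')
    linarith
  exact part_ext n z' (inner_self_eq_zero.mp h1) (inner_self_eq_zero.mp h2)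

-- standard injections
def xpartL (n : ℕ) : PS n →ₗ[ℝ] En n where
  toFun := xpart n
  map_add' a b := rfl
  map_smul' c a := by ext i; simp [xpart]
def ppartL (n : ℕ) : PS n →ₗ[ℝ] En n where
  toFun := ppart n
  map_add' a b := rfl
  map_smul' c a := by ext i; simp [ppart]
def inlL (n : ℕ) : En n →ₗ[ℝ] PS n where
  toFun x := WithLp.toLp 2 (fun i => Sum.elim x 0 i)
  map_add' a b := by ext i; cases i <;> simp
  map_smul' c a := by ext i; cases i <;> simp
def inrL (n : ℕ) : En n →ₗ[ℝ] PS n where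
  toFun x := WithLp.toLp 2 (fun i => Sum.elim 0 x i)
  map_add' a b := by ext i; cases i <;> simp
  map_smul' c a := by ext i; cases i <;> simp

lemma xpart_inl (n : ℕ) (x : En n) : xpart n (inlL n x) = x := rfl
lemma ppart_inl (n : ℕ) (x : En n) : ppart n (inlL n x) = 0 := by
  ext i; simp [ppart, inlL]
lemma xpart_inr (n : ℕ) (x : En n) : xpart n (inrL n x) = 0 := by
  ext i; simp [xpart, inrL]
lemma ppart_inr (n : ℕ) (x : En n) : ppart n (inrL n x) = x := rfl
-- frame facts
lemma frame_sup_top {n : ℕ} {ℓ ℓ' : Submodule ℝ (PS n)}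
    (h : IsLagrangianFrame n ℓ ℓ') : ℓ ⊔ ℓ' = ⊤ := by
  obtain ⟨⟨hd, _⟩, ⟨hd', _⟩, hint⟩ := h
  apply Submodule.eq_top_of_finrank_eq
  have hs := Submodule.finrank_sup_add_finrank_inf_eq ℓ ℓ'
  rw [hint] at hs
  simp only [finrank_bot, add_zero] at hs
  rw [hs, hd, hd', finrank_euclideanSpace]
  simp

lemma frame_nondeg {n : ℕ} {ℓ ℓ' : Submodule ℝ (PS n)}
    (h : IsLagrangianFrame n ℓ ℓ') (v : PS n) (hv : v ∈ ℓ')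
    (hz : ∀ u ∈ ℓ, symp n u v = 0) : v = 0 := by
  apply symp_nondeg n v
  intro z
  have htop : z ∈ ℓ ⊔ ℓ' := by rw [frame_sup_top h]; trivial
  obtain ⟨u, hu, w, hw, rfl⟩ := Submodule.mem_sup.mp htop
  rw [symp_add_left, hz u hu, h.2.1.2 w hw v hv, add_zero]
lemma pivot (n : ℕ) (ℓ ℓ' : Submodule ℝ (PS n)) (h : IsLagrangianFrame n ℓ ℓ')
    (X : Set (PS n)) (hX : IsCenteredEllipsoidOn n ℓ X) :
    ∃ S : PS n ≃ₗ[ℝ] PS n, IsSymplectic S ∧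
      (LinearMap.range (inlL n)).map S.toLinearMap = ℓ ∧
      (LinearMap.range (inrL n)).map S.toLinearMap = ℓ' ∧
      ⇑S '' (⇑(inlL n) '' Metric.closedBall 0 1) = X := by
  classical
  obtain ⟨L, r, hr, hLinj, hLrange, hXeq⟩ := hX
  set A : En n →ₗ[ℝ] PS n := r • L with hA
  have hAapp : ∀ x, A x = L (r • x) := by intro x; simp [hA]
  have hAinj : Function.Injective A := by
    intro x y hxy
    rw [hAapp, hAapp] at hxy
    have := hLinj hxy
    exact smul_right_injective _ (ne_of_gt hr) this
  have hArange : LinearMap.range A = ℓ := by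
    rw [← hLrange]
    ext u
    simp only [LinearMap.mem_range]
    constructor
    · rintro ⟨x, rfl⟩; exact ⟨r • x, (hAapp x).symm⟩
    · rintro ⟨x, rfl⟩; exact ⟨r⁻¹ • x, by rw [hAapp, smul_smul, mul_inv_cancel₀ (ne_of_gt hr), one_smul]⟩
  have hAball : ⇑A '' Metric.closedBall 0 1 = X := by
    rw [hXeq]
    ext u
    simp only [Set.mem_image, Metric.mem_closedBall, dist_zero_right]
    constructor
    · rintro ⟨x, hx, rfl⟩
      refine ⟨r • x, ?_, (hAapp x).symm⟩
      rw [norm_smul, Real.norm_eq_abs, abs_of_pos hr]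
      nlinarith [norm_nonneg x]
    · rintro ⟨y, hy, rfl⟩
      refine ⟨r⁻¹ • y, ?_, ?_⟩
      · rw [norm_smul, Real.norm_eq_abs, abs_of_pos (inv_pos.mpr hr)]
        rw [inv_mul_le_iff₀ hr, mul_one]; exact hy
      · rw [hAapp, smul_smul, mul_inv_cancel₀ (ne_of_gt hr), one_smul]
  -- membership facts
  have hAmem : ∀ x, A x ∈ ℓ := fun x => hArange ▸ LinearMap.mem_range_self A x
  -- the dual map ψ : ℓ' → En n
  set ψ : ℓ' →ₗ[ℝ] En n :=
    { toFun := fun v => (WithLp.toLp 2 (fun i => -symp n (A (EuclideanSpace.single i 1)) ↑v) : En n)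
      map_add' := by
        intro a b
        ext i
        simp [symp_add_right]
        ring
      map_smul' := by
        intro c a
        ext i
        simp only [SetLike.val_smul, symp_smul_right, RingHom.id_apply, PiLp.smul_apply, smul_eq_mul]
        ring } with hψ
  have hψapp : ∀ (v : ℓ') (i : Fin n), ψ v i = -symp n (A (EuclideanSpace.single i 1)) ↑v := by
    intro v i; rfl
  have hψinj : Function.Injective ψ := by
    rw [← LinearMap.ker_eq_bot]
    apply (Submodule.eq_bot_iff _).mpr
    intro v hv
    rw [LinearMap.mem_ker] at hv
    -- σ(A e_i, v) = 0 for all i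
    have hcoord : ∀ i, symp n (A (EuclideanSpace.single i 1)) ↑v = 0 := by
      intro i
      have := congrArg (· i) hv
      have h2 : ψ v i = 0 := by simpa using this
      rw [hψapp] at h2; linarith
    -- hence σ(u, v) = 0 for all u ∈ ℓ
    have hzero : ∀ u ∈ ℓ, symp n u (↑v) = 0 := by
      intro u hu
      rw [← hArange] at hu
      obtain ⟨x, rfl⟩ := hu
      set f : En n →ₗ[ℝ] ℝ :=
        { toFun := fun x => symp n (A x) ↑v
          map_add' := by intro a b; simp [symp_add_left]
          map_smul' := by intro c a; simp [symp_smul_left] } with hf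
      have : f = 0 := by
        apply Module.Basis.ext (EuclideanSpace.basisFun (Fin n) ℝ).toBasis
        intro i
        simp only [OrthonormalBasis.coe_toBasis, EuclideanSpace.basisFun_apply,
          LinearMap.zero_apply]
        exact hcoord i
      exact congrFun (congrArg (fun g => g.toFun) this) x
    have := frame_nondeg h (↑v) v.2 hzero
    exact Subtype.ext this
  have hdim : Module.finrank ℝ ℓ' = Module.finrank ℝ (En n) := by
    rw [h.2.1.1, finrank_euclideanSpace]; simp
  have hψsurj : Function.Surjective ψ := by
    rw [← LinearMap.range_eq_top]
    apply Submodule.eq_top_of_finrank_eq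
    rw [LinearMap.finrank_range_of_inj hψinj, hdim]
  set e : ℓ' ≃ₗ[ℝ] En n := LinearEquiv.ofBijective ψ ⟨hψinj, hψsurj⟩ with he
  set B : En n →ₗ[ℝ] PS n := ℓ'.subtype ∘ₗ (e.symm : En n →ₗ[ℝ] ℓ') with hB
  have hBmem : ∀ y, B y ∈ ℓ' := fun y => (e.symm y).2
  have hBkey : ∀ (i : Fin n) (y : En n),
      symp n (A (EuclideanSpace.single i 1)) (B y) = -(y i) := by
    intro i y
    have h1 : ψ (e.symm y) = y := e.apply_symm_apply y
    have h2 := congrArg (· i) h1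
    rw [hψapp] at h2
    have : B y = ↑(e.symm y) := rfl
    rw [this]
    linarith
  have hBinj : Function.Injective B := by
    intro a b hab
    have : (e.symm a : PS n) = (e.symm b : PS n) := hab
    have h2 : e.symm a = e.symm b := Subtype.ext this
    exact e.symm.injective h2
  have hBrange : LinearMap.range B = ℓ' := by
    rw [hB, LinearMap.range_comp, LinearEquiv.range, Submodule.map_subtype_top]
  have hABkey : ∀ x y, symp n (A x) (B y) = -⟪x, y⟫ := by
    intro x y
    set f : En n →ₗ[ℝ] ℝ :=
      { toFun := fun x => symp n (A x) (B y)
        map_add' := by intro a b; simp [symp_add_left]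
        map_smul' := by intro c a; simp [symp_smul_left] } with hf
    set g : En n →ₗ[ℝ] ℝ :=
      { toFun := fun x => -⟪x, y⟫
        map_add' := by intro a b; simp only [inner_add_left]; ring
        map_smul' := by intro c a; simp only [real_inner_smul_left, RingHom.id_apply, smul_eq_mul]; ring } with hg
    have : f = g := by
      apply Module.Basis.ext (EuclideanSpace.basisFun (Fin n) ℝ).toBasis
      intro i
      simp only [OrthonormalBasis.coe_toBasis, EuclideanSpace.basisFun_apply, hf, hg,
        LinearMap.coe_mk, AddHom.coe_mk]
      rw [hBkey i y]
      congr 1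
      rw [EuclideanSpace.inner_single_left]
      simp
    exact congrFun (congrArg (fun k => k.toFun) this) x
  -- the symplectic map
  set T : PS n →ₗ[ℝ] PS n := A ∘ₗ xpartL n + B ∘ₗ ppartL n with hT
  have hTapp : ∀ z, T z = A (xpart n z) + B (ppart n z) := fun z => rfl
  have hTs : ∀ z z', symp n (T z) (T z') = symp n z z' := by
    intro z z'
    rw [hTapp, hTapp, symp_add_left, symp_add_right, symp_add_right]
    rw [h.1.2 _ (hAmem _) _ (hAmem _), h.2.1.2 _ (hBmem _) _ (hBmem _)]
    rw [hABkey]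
    have : symp n (B (ppart n z)) (A (xpart n z')) = ⟪xpart n z', ppart n z⟫ := by
      rw [symp_swap, hABkey]; ring
    rw [this, symp_eq]
    rw [real_inner_comm (xpart n z') (ppart n z)]
    ring
  have hTinj : Function.Injective T := by
    rw [← LinearMap.ker_eq_bot]
    apply (Submodule.eq_bot_iff _).mpr
    intro z hz
    rw [LinearMap.mem_ker, hTapp] at hz
    have hmem : A (xpart n z) ∈ ℓ ⊓ ℓ' := by
      constructor
      · exact hAmem _
      · have : A (xpart n z) = -(B (ppart n z)) := by
          rw [eq_neg_iff_add_eq_zero]; exact hz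
        rw [this]; exact neg_mem (hBmem _)
    rw [h.2.2] at hmem
    have hx0 : A (xpart n z) = 0 := hmem
    have hp0 : B (ppart n z) = 0 := by
      rw [hx0, zero_add] at hz; exact hz
    have hx : xpart n z = 0 := hAinj (by rw [hx0, map_zero])
    have hp : ppart n z = 0 := hBinj (by rw [hp0, map_zero])
    exact part_ext n z hx hp
  have hTsurj : Function.Surjective T := LinearMap.injective_iff_surjective.mp hTinj
  refine ⟨LinearEquiv.ofBijective T ⟨hTinj, hTsurj⟩, ?_, ?_, ?_, ?_⟩
  · intro z z'; exact hTs z z'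
  · rw [← LinearMap.range_comp]
    have : (LinearEquiv.ofBijective T ⟨hTinj, hTsurj⟩).toLinearMap ∘ₗ inlL n = A := by
      apply LinearMap.ext
      intro x
      show T (inlL n x) = A x
      rw [hTapp, xpart_inl, ppart_inl, map_zero, add_zero]
    rw [this, hArange]
  · rw [← LinearMap.range_comp]
    have : (LinearEquiv.ofBijective T ⟨hTinj, hTsurj⟩).toLinearMap ∘ₗ inrL n = B := by
      apply LinearMap.ext
      intro x
      show T (inrL n x) = B x
      rw [hTapp, xpart_inr, ppart_inr, map_zero, zero_add]
    rw [this, hBrange]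
  · have hcomp : ⇑(LinearEquiv.ofBijective T ⟨hTinj, hTsurj⟩) ∘ ⇑(inlL n) = ⇑A := by
      funext x
      show T (inlL n x) = A x
      rw [hTapp, xpart_inl, ppart_inl, map_zero, add_zero]
    rw [← Set.image_comp, hcomp, hAball]
lemma image_minkowski {n : ℕ} (S : PS n ≃ₗ[ℝ] PS n) (U V : Set (PS n)) :
    ⇑S '' (U + V) = ⇑S '' U + ⇑S '' V := by
  ext w
  simp only [Set.mem_image, Set.mem_add]
  constructor
  · rintro ⟨z, ⟨u, hu, v, hv, rfl⟩, rfl⟩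
    exact ⟨S u, ⟨u, hu, rfl⟩, S v, ⟨v, hv, rfl⟩, (map_add S u v).symm⟩
  · rintro ⟨_, ⟨u, hu, rfl⟩, _, ⟨v, hv, rfl⟩, rfl⟩
    exact ⟨u + v, ⟨u, hu, v, hv, rfl⟩, map_add S u v⟩

lemma image_lagDual {n : ℕ} (ℏ : ℝ) (S : PS n ≃ₗ[ℝ] PS n) (hS : IsSymplectic S)
    (ℓ' : Submodule ℝ (PS n)) (X : Set (PS n)) :
    ⇑S '' lagDual n ℏ ℓ' X = lagDual n ℏ (ℓ'.map S.toLinearMap) (⇑S '' X) := by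
  ext w
  constructor
  · rintro ⟨v, ⟨hv, hd⟩, rfl⟩
    refine ⟨Submodule.mem_map_of_mem hv, ?_⟩
    rintro y ⟨z, hz, rfl⟩
    rw [hS]; exact hd z hz
  · rintro ⟨hw, hd⟩
    obtain ⟨v, hv, hvw⟩ := Submodule.mem_map.mp hw
    refine ⟨v, ⟨hv, ?_⟩, hvw⟩
    intro z hz
    rw [← hS z v]
    have : (S.toLinearMap v : PS n) = S v := rfl
    rw [this] at hvw
    rw [hvw]
    exact hd (S z) ⟨z, hz, rfl⟩

/-- the symplectic group acts transitively on centered elliptic geometric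
quantum states: given Lagrangian frames `(ℓ, ℓ')`, `(ℓ'', ℓ''')` and centered ellipsoids
`X₁ ⊆ ℓ`, `X₂ ⊆ ℓ''`, some linear symplectic automorphism `S` maps the geometric state
`X₁ + (X₁)^ℏ_{ℓ'}` onto `X₂ + (X₂)^ℏ_{ℓ'''}`, with `S(ℓ) = ℓ''`, `S(ℓ') = ℓ'''` and
`S(X₁) = X₂`. -/
theorem stmt18 (n : ℕ) (ℏ : ℝ) (hℏ : 0 < ℏ)
    (ℓ ℓ' ℓ'' ℓ''' : Submodule ℝ (PS n))
    (h1 : IsLagrangianFrame n ℓ ℓ') (h2 : IsLagrangianFrame n ℓ'' ℓ''')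
    (X₁ X₂ : Set (PS n))
    (hX₁ : IsCenteredEllipsoidOn n ℓ X₁) (hX₂ : IsCenteredEllipsoidOn n ℓ'' X₂) :
    ∃ S : PS n ≃ₗ[ℝ] PS n, IsSymplectic S ∧
      ⇑S '' (X₁ + lagDual n ℏ ℓ' X₁) = X₂ + lagDual n ℏ ℓ''' X₂ ∧
      ℓ.map S.toLinearMap = ℓ'' ∧ ℓ'.map S.toLinearMap = ℓ''' ∧ ⇑S '' X₁ = X₂ := by
  obtain ⟨S₁, hS₁s, hS₁l, hS₁l', hS₁X⟩ := pivot n ℓ ℓ' h1 X₁ hX₁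
  obtain ⟨S₂, hS₂s, hS₂l, hS₂l', hS₂X⟩ := pivot n ℓ'' ℓ''' h2 X₂ hX₂
  set S : PS n ≃ₗ[ℝ] PS n := S₁.symm.trans S₂ with hS
  have hSapp : ∀ z, S z = S₂ (S₁.symm z) := fun z => rfl
  have hSsymp : IsSymplectic S := by
    intro z z'
    rw [hSapp, hSapp, hS₂s]
    have := hS₁s (S₁.symm z) (S₁.symm z')
    rw [S₁.apply_symm_apply, S₁.apply_symm_apply] at this
    exact this.symm
  have hcomp : S.toLinearMap ∘ₗ S₁.toLinearMap = S₂.toLinearMap := by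
    apply LinearMap.ext
    intro z
    show S (S₁ z) = S₂ z
    rw [hSapp, S₁.symm_apply_apply]
  have hmapl : ℓ.map S.toLinearMap = ℓ'' := by
    rw [← hS₁l, ← hS₂l, ← Submodule.map_comp, hcomp]
  have hmapl' : ℓ'.map S.toLinearMap = ℓ''' := by
    rw [← hS₁l', ← hS₂l', ← Submodule.map_comp, hcomp]
  have hfun : ∀ x, S (S₁ x) = S₂ x := by
    intro x; rw [hSapp, S₁.symm_apply_apply]
  have hXim : ⇑S '' X₁ = X₂ := by
    rw [← hS₁X, ← hS₂X, ← Set.image_comp]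
    apply Set.image_congr
    intro x _
    exact hfun x
  refine ⟨S, hSsymp, ?_, hmapl, hmapl', hXim⟩
  rw [image_minkowski, hXim, image_lagDual ℏ S hSsymp, hmapl', hXim]
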